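/- Let θ > 0 and let p be any probability density on ℝ. Then 4 ∫_ℝ y² / (e^{−yθ} + e^{yθ})² p(y) dy ≤ 4/(θ² e²). In particular, for the symmetric two-component Gaussian mixture density p_{θ*}, the derivative of the population EM map M₀ at θ* satisfies M₀'(θ*) = 4 ∫ y²/(e^{−yθ*}+e^{yθ*})² p_{θ*}(y) dy ≤ 4/(θ*² e²). -/

import Mathlib

open MeasureTheory

lemma EMaux.denom_pos (t : ℝ) : 0 < Real.exp (-t) + Real.exp t :=
  add_pos (Real.exp_pos _) (Real.exp_pos _)

lemma EMaux.denom_ge_exp_abs (t : ℝ) : Real.exp |t| ≤ Real.exp (-t) + Real.exp t := by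
  rcases abs_cases t with ⟨h, _⟩ | ⟨h, _⟩
  · rw [h]; linarith [Real.exp_pos (-t)]
  · rw [h]; linarith [Real.exp_pos t]

lemma EMaux.denom_ge_two (t : ℝ) : 2 ≤ Real.exp (-t) + Real.exp t := by
  rw [Real.exp_neg]
  have h := Real.exp_pos t
  have h2 : Real.exp t * (Real.exp t)⁻¹ = 1 := mul_inv_cancel₀ h.ne'
  nlinarith [sq_nonneg (Real.exp t - 1)]

lemma EMaux.ptwise {θ : ℝ} (hθ : 0 < θ) (y : ℝ) :
    y ^ 2 / (Real.exp (-(y * θ)) + Real.exp (y * θ)) ^ 2 ≤ 1 / (θ ^ 2 * Real.exp 1 ^ 2) := by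
  have hD := EMaux.denom_ge_exp_abs (y * θ)
  have hDpos := EMaux.denom_pos (y * θ)
  have hE : (0:ℝ) < Real.exp |y * θ| := Real.exp_pos _
  have h1 : y ^ 2 / (Real.exp (-(y * θ)) + Real.exp (y * θ)) ^ 2
      ≤ y ^ 2 / Real.exp |y * θ| ^ 2 := by
    apply div_le_div_of_nonneg_left (sq_nonneg y) (pow_pos hE 2)
    exact pow_le_pow_left₀ hE.le hD 2
  refine h1.trans ?_
  -- key: |yθ| ≤ exp(|yθ| - 1)
  have hu : |y * θ| ≤ Real.exp (|y * θ| - 1) := by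
    have := Real.add_one_le_exp (|y * θ| - 1)
    linarith
  have hexp : Real.exp (|y * θ| - 1) = Real.exp |y * θ| / Real.exp 1 := Real.exp_sub _ _
  rw [hexp] at hu
  have he1 : (0:ℝ) < Real.exp 1 := Real.exp_pos 1
  rw [div_le_div_iff₀ (pow_pos hE 2) (by positivity)]
  have habs : |y * θ| ^ 2 = y ^ 2 * θ ^ 2 := by
    rw [← abs_pow]; rw [mul_pow]; rw [abs_of_nonneg (by positivity)]
  have hsq : |y * θ| ^ 2 ≤ (Real.exp |y * θ| / Real.exp 1) ^ 2 := by
    apply pow_le_pow_left₀ (abs_nonneg _) hu 2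
  rw [habs, div_pow] at hsq
  have := mul_le_mul_of_nonneg_right hsq (le_of_lt (pow_pos he1 2))
  rw [div_mul_cancel₀ _ (by positivity : (Real.exp 1)^2 ≠ 0)] at this
  nlinarith

lemma EMaux.integrable_sq_gauss {b : ℝ} (hb : 0 < b) :
    Integrable (fun x : ℝ => x ^ 2 * Real.exp (-b * x ^ 2)) := by
  have h := integrable_rpow_mul_exp_neg_mul_sq hb (s := 2) (by norm_num)
  have : (fun x : ℝ => x ^ (2:ℝ) * Real.exp (-b * x ^ 2))
      = fun x : ℝ => x ^ 2 * Real.exp (-b * x ^ 2) := by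
    funext x
    rw [show ((2:ℝ) = ((2:ℕ):ℝ)) by norm_num, Real.rpow_natCast]
  rwa [this] at h

lemma EMaux.quad_bound (a y : ℝ) : Real.exp (-(y - a) ^ 2 / 2) ≤ Real.exp (a ^ 2 / 2) * Real.exp (-(1/4) * y ^ 2) := by
  rw [← Real.exp_add]
  apply Real.exp_le_exp.mpr
  nlinarith [sq_nonneg (y - 2*a)]

lemma EMaux.integrable_gauss_shift (a : ℝ) :
    Integrable (fun y : ℝ => Real.exp (-(y - a) ^ 2 / 2)) := by
  refine Integrable.mono' ((integrable_exp_neg_mul_sq (by norm_num : (0:ℝ) < 1/4)).const_mul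
    (Real.exp (a ^ 2 / 2))) ?_ ?_
  · exact (Continuous.aestronglyMeasurable (by continuity))
  · filter_upwards with y
    rw [Real.norm_eq_abs, abs_of_nonneg (Real.exp_nonneg _)]
    exact EMaux.quad_bound a y

lemma EMaux.integrable_sq_gauss_shift (a : ℝ) :
    Integrable (fun y : ℝ => y ^ 2 * Real.exp (-(y - a) ^ 2 / 2)) := by
  refine Integrable.mono' ((EMaux.integrable_sq_gauss (by norm_num : (0:ℝ) < 1/4)).const_mul
    (Real.exp (a ^ 2 / 2))) ?_ ?_
  · exact (Continuous.aestronglyMeasurable (by continuity))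
  · filter_upwards with y
    rw [Real.norm_eq_abs, abs_of_nonneg (by positivity)]
    calc y ^ 2 * Real.exp (-(y - a) ^ 2 / 2)
        ≤ y ^ 2 * (Real.exp (a ^ 2 / 2) * Real.exp (-(1/4) * y ^ 2)) :=
          mul_le_mul_of_nonneg_left (EMaux.quad_bound a y) (sq_nonneg y)
      _ = Real.exp (a ^ 2 / 2) * (y ^ 2 * Real.exp (-(1/4) * y ^ 2)) := by ring

lemma EMaux.integral_gauss_shift (a : ℝ) :
    ∫ y : ℝ, Real.exp (-(y - a) ^ 2 / 2) = Real.sqrt (2 * Real.pi) := by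
  rw [show (fun y : ℝ => Real.exp (-(y - a) ^ 2 / 2)) = fun y : ℝ => (fun x : ℝ => Real.exp (-(1/2) * x ^ 2)) (y - a) by funext y; ring_nf]
  rw [integral_sub_right_eq_self (fun x : ℝ => Real.exp (-(1/2) * x ^ 2)) a]
  rw [integral_gaussian]
  rw [show Real.pi / (1/2) = 2 * Real.pi by ring]

-- Part 1 as a general lemma
lemma EMaux.part1 {θ : ℝ} (hθ : 0 < θ) (p : ℝ → ℝ) (hp0 : ∀ y, 0 ≤ p y)
    (hp1 : ∫ y : ℝ, p y = 1) :
    (4 * ∫ y : ℝ, y ^ 2 / (Real.exp (-(y * θ)) + Real.exp (y * θ)) ^ 2 * p y)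
      ≤ 4 / (θ ^ 2 * Real.exp 1 ^ 2) := by
  have hpint : Integrable p := by
    by_contra h
    rw [integral_undef h] at hp1
    norm_num at hp1
  set f : ℝ → ℝ := fun y => y ^ 2 / (Real.exp (-(y * θ)) + Real.exp (y * θ)) ^ 2 with hf
  have hfc : Continuous f := by
    apply Continuous.div (by continuity) (by continuity)
    intro y
    exact (pow_pos (EMaux.denom_pos (y * θ)) 2).ne'
  have hfb : ∀ y, ‖f y‖ ≤ 1 / (θ ^ 2 * Real.exp 1 ^ 2) := by
    intro y
    rw [Real.norm_eq_abs, abs_of_nonneg (by positivity)]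
    exact EMaux.ptwise hθ y
  have hint : Integrable (fun y => f y * p y) :=
    hpint.bdd_mul hfc.aestronglyMeasurable (Filter.Eventually.of_forall hfb)
  have hmono : ∫ y : ℝ, f y * p y ≤ ∫ y : ℝ, (1 / (θ ^ 2 * Real.exp 1 ^ 2)) * p y := by
    apply integral_mono hint (hpint.const_mul _)
    intro y
    have := hfb y
    rw [Real.norm_eq_abs, abs_of_nonneg (by positivity)] at this
    exact mul_le_mul_of_nonneg_right this (hp0 y)
  rw [integral_const_mul, hp1, mul_one] at hmono
  calc 4 * ∫ y : ℝ, f y * p y ≤ 4 * (1 / (θ ^ 2 * Real.exp 1 ^ 2)) := by linarith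
    _ = 4 / (θ ^ 2 * Real.exp 1 ^ 2) := by ring

/-- for any probability density `p` on `ℝ` and `θ > 0`,
`4 ∫ y² / (e^{−yθ} + e^{yθ})² p(y) dy ≤ 4/(θ² e²)`; in particular the derivative
of the population EM map `M₀` of the symmetric two-Gaussian mixture at `θstar`
equals that integral (for `p = p_{θstar}`) and is bounded by `4/(θstar² e²)`. -/
theorem em_map_derivative_bound
    (θ : ℝ) (hθ : 0 < θ)
    (p : ℝ → ℝ) (hp0 : ∀ y, 0 ≤ p y) (hp1 : ∫ y : ℝ, p y = 1)
    (θstar : ℝ) (hθstar : 0 < θstar)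
    (pstar : ℝ → ℝ)
    (hpstar : pstar = fun y => (1 / (2 * Real.sqrt (2 * Real.pi))) *
      (Real.exp (-(y - θstar) ^ 2 / 2) + Real.exp (-(y + θstar) ^ 2 / 2)))
    (q : ℝ → ℝ → ℝ)
    (hq : q = fun θ' y => 1 / (1 + Real.exp (2 * y * θ')))
    (M0 : ℝ → ℝ)
    (hM0 : M0 = fun θ' => ∫ y : ℝ, (1 - 2 * q θ' y) * y * pstar y) :
    (4 * ∫ y : ℝ, y ^ 2 / (Real.exp (-(y * θ)) + Real.exp (y * θ)) ^ 2 * p y)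
        ≤ 4 / (θ ^ 2 * Real.exp 1 ^ 2) ∧
    deriv M0 θstar = 4 * ∫ y : ℝ,
        y ^ 2 / (Real.exp (-(y * θstar)) + Real.exp (y * θstar)) ^ 2 * pstar y ∧
    deriv M0 θstar ≤ 4 / (θstar ^ 2 * Real.exp 1 ^ 2) := by
  -- basic facts about pstar
  have hsqrtpos : 0 < Real.sqrt (2 * Real.pi) := Real.sqrt_pos.mpr (by positivity)
  have hps0 : ∀ y, 0 ≤ pstar y := by
    intro y; rw [hpstar]; positivity
  have hpsc : Continuous pstar := by rw [hpstar]; continuity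
  have hpsint : Integrable pstar := by
    rw [hpstar]
    exact (((EMaux.integrable_gauss_shift θstar).add
      (by simpa [sub_neg_eq_add] using EMaux.integrable_gauss_shift (-θstar))).const_mul _)
  have hps1 : ∫ y : ℝ, pstar y = 1 := by
    rw [hpstar]
    rw [integral_const_mul]
    rw [integral_add (EMaux.integrable_gauss_shift θstar)
      (by simpa [sub_neg_eq_add] using EMaux.integrable_gauss_shift (-θstar))]
    have h2 : ∫ y : ℝ, Real.exp (-(y + θstar) ^ 2 / 2) = Real.sqrt (2 * Real.pi) := by
      simpa [sub_neg_eq_add] using EMaux.integral_gauss_shift (-θstar)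
    rw [EMaux.integral_gauss_shift θstar, h2]
    field_simp
    ring
  have hbint : Integrable (fun y : ℝ => y ^ 2 * pstar y) := by
    rw [hpstar]
    have : (fun y : ℝ => y ^ 2 * ((1 / (2 * Real.sqrt (2 * Real.pi))) *
        (Real.exp (-(y - θstar) ^ 2 / 2) + Real.exp (-(y + θstar) ^ 2 / 2))))
        = fun y : ℝ => (1 / (2 * Real.sqrt (2 * Real.pi))) *
          (y ^ 2 * Real.exp (-(y - θstar) ^ 2 / 2) + y ^ 2 * Real.exp (-(y + θstar) ^ 2 / 2)) := by
      funext y; ring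
    rw [this]
    exact (((EMaux.integrable_sq_gauss_shift θstar).add
      (by simpa [sub_neg_eq_add] using EMaux.integrable_sq_gauss_shift (-θstar))).const_mul _)
  -- the derivative
  set F : ℝ → ℝ → ℝ := fun x y => (1 - 2 * q x y) * y * pstar y with hF
  set F' : ℝ → ℝ → ℝ := fun x y =>
    4 * (y ^ 2 / (Real.exp (-(y * x)) + Real.exp (y * x)) ^ 2 * pstar y) with hF'
  have hderiv : ∀ (x y : ℝ), HasDerivAt (fun x' => F x' y) (F' x y) x := by
    intro x y
    have hGpos : (0:ℝ) < 1 + Real.exp (2 * y * x) := by positivity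
    have h1 : HasDerivAt (fun x' : ℝ => 2 * y * x') (2 * y) x := by
      simpa using (hasDerivAt_id x).const_mul (2 * y)
    have h2 := h1.exp
    have h3 := (h2.const_add 1)
    have h4 := h3.inv hGpos.ne'
    have h5 := (h4.const_mul 2).const_sub 1
    have h6 := (h5.mul_const y).mul_const (pstar y)
    have heq : (fun x' => F x' y)
        = fun x' => (1 - 2 * (1 + Real.exp (2 * y * x'))⁻¹) * y * pstar y := by
      funext x'; rw [hF, hq]; simp [one_div]
    rw [heq]
    refine h6.congr_deriv (Eq.symm ?_)
    -- algebraic identity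
    have hab : Real.exp (-(y * x)) * Real.exp (y * x) = 1 := by
      rw [← Real.exp_add]; simp
    have hsq : Real.exp (2 * y * x) = Real.exp (y * x) ^ 2 := by
      rw [pow_two, ← Real.exp_add]; ring_nf
    have hDE : (Real.exp (-(y * x)) + Real.exp (y * x)) ^ 2 * Real.exp (2 * y * x)
        = (1 + Real.exp (2 * y * x)) ^ 2 := by
      rw [hsq]; nlinarith [hab]
    show (4:ℝ) * (y ^ 2 / (Real.exp (-(y * x)) + Real.exp (y * x)) ^ 2 * pstar y) =
      -(2 * (-(Real.exp (2 * y * x) * (2 * y)) / (1 + Real.exp (2 * y * x)) ^ 2)) * y * pstar y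
    have hDpos : (0:ℝ) < (Real.exp (-(y * x)) + Real.exp (y * x)) ^ 2 :=
      pow_pos (EMaux.denom_pos (y * x)) 2
    have hden : y ^ 2 / (Real.exp (-(y * x)) + Real.exp (y * x)) ^ 2
        = y ^ 2 * Real.exp (2 * y * x) / (1 + Real.exp (2 * y * x)) ^ 2 := by
      rw [div_eq_div_iff hDpos.ne' (pow_pos hGpos 2).ne']
      linear_combination (-y ^ 2) * hDE
    rw [hden]
    field_simp
    ring
  -- measurability / integrability inputs
  have hqc : ∀ x : ℝ, Continuous (fun y => q x y) := by
    intro x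
    rw [hq]
    show Continuous fun y : ℝ => 1 / (1 + Real.exp (2 * y * x))
    exact continuous_const.div
      (continuous_const.add (Real.continuous_exp.comp
        ((continuous_const.mul continuous_id).mul continuous_const)))
      (fun y => by positivity)
  have hq_bound : ∀ x y : ℝ, |1 - 2 * q x y| ≤ 1 := by
    intro x y
    rw [hq]
    show |1 - 2 * (1 / (1 + Real.exp (2 * y * x)))| ≤ 1
    have h1 : (0:ℝ) < 1 + Real.exp (2 * y * x) := by positivity
    have h2 : (0:ℝ) < 1 / (1 + Real.exp (2 * y * x)) := by positivity
    have h3 : 1 / (1 + Real.exp (2 * y * x)) < 1 := by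
      rw [div_lt_one h1]
      linarith [Real.exp_pos (2 * y * x)]
    rw [abs_le]
    constructor <;> nlinarith
  have hFmeas : ∀ x : ℝ, AEStronglyMeasurable (F x) volume := by
    intro x
    exact (((continuous_const.sub (continuous_const.mul (hqc x))).mul continuous_id).mul
      hpsc).aestronglyMeasurable
  have hF'cont : ∀ x : ℝ, Continuous (F' x) := by
    intro x
    apply continuous_const.mul
    apply Continuous.mul _ hpsc
    have hd : Continuous fun y : ℝ => (Real.exp (-(y * x)) + Real.exp (y * x)) ^ 2 :=
      ((Real.continuous_exp.comp (continuous_id.mul continuous_const).neg).add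
        (Real.continuous_exp.comp (continuous_id.mul continuous_const))).pow 2
    exact Continuous.div (continuous_pow 2) hd
      (fun y => (pow_pos (EMaux.denom_pos (y * x)) 2).ne')
  have habs_y : ∀ y : ℝ, |y| ≤ 1 + y ^ 2 := by
    intro y
    nlinarith [sq_nonneg (|y| - 1), abs_nonneg y, sq_abs y]
  have hFint : Integrable (F θstar) := by
    refine Integrable.mono' (hpsint.add hbint) (hFmeas θstar) ?_
    filter_upwards with y
    rw [hF]
    simp only []
    rw [Real.norm_eq_abs, abs_mul, abs_mul, abs_of_nonneg (hps0 y)]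
    calc |1 - 2 * q θstar y| * |y| * pstar y
        ≤ 1 * (1 + y ^ 2) * pstar y := by
          apply mul_le_mul_of_nonneg_right _ (hps0 y)
          exact mul_le_mul (hq_bound θstar y) (habs_y y) (abs_nonneg y) zero_le_one
      _ = pstar y + y ^ 2 * pstar y := by ring
  have h_bound : ∀ y : ℝ, ∀ x ∈ Metric.ball θstar 1, ‖F' x y‖ ≤ y ^ 2 * pstar y := by
    intro y x _
    show ‖(4:ℝ) * (y ^ 2 / (Real.exp (-(y * x)) + Real.exp (y * x)) ^ 2 * pstar y)‖
      ≤ y ^ 2 * pstar y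
    rw [Real.norm_eq_abs]
    have hDpos : (0:ℝ) < (Real.exp (-(y * x)) + Real.exp (y * x)) ^ 2 :=
      pow_pos (EMaux.denom_pos (y * x)) 2
    have hD4 : (4:ℝ) ≤ (Real.exp (-(y * x)) + Real.exp (y * x)) ^ 2 := by
      nlinarith [EMaux.denom_ge_two (y * x), EMaux.denom_pos (y * x)]
    rw [abs_of_nonneg (mul_nonneg (by norm_num : (0:ℝ) ≤ 4)
      (mul_nonneg (by positivity) (hps0 y)))]
    have h1 : y ^ 2 / (Real.exp (-(y * x)) + Real.exp (y * x)) ^ 2 ≤ y ^ 2 / 4 := by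
      apply div_le_div_of_nonneg_left (sq_nonneg y) (by norm_num) hD4
    calc 4 * (y ^ 2 / (Real.exp (-(y * x)) + Real.exp (y * x)) ^ 2 * pstar y)
        ≤ 4 * (y ^ 2 / 4 * pstar y) := by
          apply mul_le_mul_of_nonneg_left _ (by norm_num)
          exact mul_le_mul_of_nonneg_right h1 (hps0 y)
      _ = y ^ 2 * pstar y := by ring
  have key := hasDerivAt_integral_of_dominated_loc_of_deriv_le (μ := volume) (x₀ := θstar)
    (F := F) (F' := F') (bound := fun y => y ^ 2 * pstar y) (Metric.ball_mem_nhds θstar one_pos)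
    (Filter.Eventually.of_forall fun x => hFmeas x) hFint
    ((hF'cont θstar).aestronglyMeasurable)
    (Filter.Eventually.of_forall h_bound) hbint
    (Filter.Eventually.of_forall fun y => fun x _ => hderiv x y)
  have hM0eq : M0 = fun x => ∫ y : ℝ, F x y := by rw [hM0, hF]
  have hM0deriv : deriv M0 θstar = ∫ y : ℝ, F' θstar y := by
    rw [hM0eq]
    exact key.2.deriv
  have hintF' : ∫ y : ℝ, F' θstar y = 4 * ∫ y : ℝ,
      y ^ 2 / (Real.exp (-(y * θstar)) + Real.exp (y * θstar)) ^ 2 * pstar y := by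
    rw [hF']
    exact integral_const_mul 4 _
  refine ⟨EMaux.part1 hθ p hp0 hp1, ?_, ?_⟩
  · rw [hM0deriv, hintF']
  · rw [hM0deriv, hintF']
    exact EMaux.part1 hθstar pstar hps0 hps1
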